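/- Suppose there exists T such that P(X + Z > t) ≤ P(Z > t) for all t ≥ T. Then there exists c ∈ ℝ (sufficiently large) such that for every b ≥ 0, the path measure ℚ^{b,c} induced by the Blanchet–Glynn transition kernel is a direct proposal for exact conditional sampling from ℙ(· | τ_b < ∞). -/

import Mathlib

open MeasureTheory ProbabilityTheory Filter Set
open scoped ENNReal

/-- The one-step transition law of the random walk: from state `y`, move to `y + X`
where `X` has law `μX`. -/
noncomputable def stepLaw (μX : Measure ℝ) (y : ℝ) : Measure ℝ :=
  μX.map (fun x => y + x)

/-- The Blanchet–Glynn transition kernel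
`Q^{b,c}(y, dz) = P(y, dz) · v(z−b−c)/w(y−b−c)`, where `P(y,·)` is the law of `y + X`. -/
noncomputable def BGkernel (μX : Measure ℝ) (v w : ℝ → ℝ) (b c : ℝ) (y : ℝ) : Measure ℝ :=
  (stepLaw μX y).withDensity fun z => ENNReal.ofReal (v (z - b - c) / w (y - b - c))

/-- The law of the first `n+1` steps of a Markov chain with transition law `κ`
started at `x0`. -/
noncomputable def finLaw (κ : ℝ → Measure ℝ) (x0 : ℝ) : (n : ℕ) → Measure (Fin (n + 1) → ℝ)
  | 0 => Measure.dirac fun _ => x0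
  | n + 1 => (finLaw κ x0 n).bind fun v =>
      (κ (v (Fin.last n))).map fun z => Fin.snoc v z

/-- `Q` is the path law on `ℝ^ℕ` of the Markov chain started at `x0` with transition
law `κ`: all its finite-dimensional distributions equal the iterated kernel laws. -/
def IsMarkovLaw (κ : ℝ → Measure ℝ) (x0 : ℝ) (Q : Measure (ℕ → ℝ)) : Prop :=
  IsProbabilityMeasure Q ∧
  ∀ n : ℕ, Q.map (fun s (i : Fin (n + 1)) => s i.val) = finLaw κ x0 n

/-- The barrier-crossing event `{τ_b < ∞}`. -/
def crossEvent (b : ℝ) : Set (ℕ → ℝ) := {s | ∃ n, s n > b}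

/-- `B` belongs to the σ-algebra `F_{τ_b}` of the stopping time `τ_b`:
for every `n`, the set `B ∩ {τ_b = n}` is measurable w.r.t. the σ-algebra generated
by the first `n+1` coordinates. -/
def StoppedMeasurable (b : ℝ) (B : Set (ℕ → ℝ)) : Prop :=
  ∀ n : ℕ, MeasurableSet[MeasurableSpace.comap
      (fun (s : ℕ → ℝ) (i : Fin (n + 1)) => s i.val) inferInstance]
    (B ∩ {s : ℕ → ℝ | s n > b ∧ ∀ k < n, s k ≤ b})

/-- `Qp` is a direct proposal for exact conditional sampling from `Pp(· | τ_b < ∞)`: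
`Qp(B) ≥ Pp(B)` for every `B ∈ F_{τ_b}` with `B ⊆ {τ_b < ∞}`, with strict inequality
for at least one such `B`. -/
def DirectProposal (b : ℝ) (Pp Qp : Measure (ℕ → ℝ)) : Prop :=
  (∀ B : Set (ℕ → ℝ), StoppedMeasurable b B → B ⊆ crossEvent b → Pp B ≤ Qp B) ∧
  ∃ B : Set (ℕ → ℝ), StoppedMeasurable b B ∧ B ⊆ crossEvent b ∧ Pp B < Qp B

/-- The barrier-crossing time `τ_b = inf{n : s n > b}`, with value `∞` if the path
never crosses the barrier. -/
noncomputable def tauInf (b : ℝ) (s : ℕ → ℝ) : ℝ≥0∞ :=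
  ⨅ n ∈ {m : ℕ | s m > b}, (n : ℝ≥0∞)

section A

lemma measurable_snoc_fixed {n : ℕ} (x : Fin (n+1) → ℝ) :
    Measurable (fun z : ℝ => (Fin.snoc x z : Fin (n+2) → ℝ)) := by
  apply measurable_pi_lambda
  intro i
  refine Fin.lastCases ?_ ?_ i
  · simpa using measurable_id'
  · intro j; simpa using measurable_const

lemma measurable_snocAdd {n : ℕ} :
    Measurable (fun p : (Fin (n+1) → ℝ) × ℝ =>
      (Fin.snoc p.1 (p.1 (Fin.last n) + p.2) : Fin (n+2) → ℝ)) := by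
  apply measurable_pi_lambda
  intro i
  refine Fin.lastCases ?_ ?_ i
  · simpa using (by fun_prop : Measurable fun c : (Fin (n+1) → ℝ) × ℝ => c.1 (Fin.last n) + c.2)
  · intro j; simpa using (by fun_prop : Measurable fun c : (Fin (n+1) → ℝ) × ℝ => c.1 j)

lemma measurable_stepMap (μ : Measure ℝ) [SFinite μ] (n : ℕ) :
    Measurable (fun x : Fin (n+1) → ℝ =>
      ((stepLaw μ (x (Fin.last n))).map (Fin.snoc x) : Measure (Fin (n+2) → ℝ))) := by
  apply Measure.measurable_of_measurable_coe
  intro s hs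
  have hT : MeasurableSet {p : (Fin (n+1) → ℝ) × ℝ |
      (Fin.snoc p.1 (p.1 (Fin.last n) + p.2) : Fin (n+2) → ℝ) ∈ s} :=
    measurable_snocAdd hs
  have heq : (fun x : Fin (n+1) → ℝ => ((stepLaw μ (x (Fin.last n))).map (Fin.snoc x)) s)
      = fun x => μ (Prod.mk x ⁻¹' {p : (Fin (n+1) → ℝ) × ℝ |
          (Fin.snoc p.1 (p.1 (Fin.last n) + p.2) : Fin (n+2) → ℝ) ∈ s}) := by
    funext x
    rw [Measure.map_apply (measurable_snoc_fixed x) hs]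
    unfold stepLaw
    rw [Measure.map_apply (f := fun u : ℝ => x (Fin.last n) + u) (by fun_prop) ((measurable_snoc_fixed x) hs)]
    rfl
  rw [heq]
  exact measurable_measure_prodMk_left hT

lemma measurable_BGMap (μ : Measure ℝ) [SFinite μ] {v w : ℝ → ℝ}
    (hvm : Measurable v) (hwm : Measurable w) (b c : ℝ) (n : ℕ) :
    Measurable (fun x : Fin (n+1) → ℝ =>
      ((BGkernel μ v w b c (x (Fin.last n))).map (Fin.snoc x) : Measure (Fin (n+2) → ℝ))) := by
  apply Measure.measurable_of_measurable_coe
  intro s hs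
  set T : Set ((Fin (n+1) → ℝ) × ℝ) := {p |
      (Fin.snoc p.1 (p.1 (Fin.last n) + p.2) : Fin (n+2) → ℝ) ∈ s} with hTdef
  have hT : MeasurableSet T := measurable_snocAdd hs
  set G : (Fin (n+1) → ℝ) × ℝ → ℝ≥0∞ := fun p =>
    ENNReal.ofReal (v (p.1 (Fin.last n) + p.2 - b - c) / w (p.1 (Fin.last n) - b - c)) with hGdef
  have hyl : Measurable fun p : (Fin (n+1) → ℝ) × ℝ => p.1 (Fin.last n) :=
    (measurable_pi_apply _).comp measurable_fst
  have hG : Measurable G := by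
    apply ENNReal.measurable_ofReal.comp
    exact ((hvm.comp (((hyl.add measurable_snd).sub measurable_const).sub measurable_const)).div
      (hwm.comp ((hyl.sub measurable_const).sub measurable_const)))
  have heq : (fun x : Fin (n+1) → ℝ => ((BGkernel μ v w b c (x (Fin.last n))).map (Fin.snoc x)) s)
      = fun x => ∫⁻ u, T.indicator G (x, u) ∂μ := by
    funext x
    set y := x (Fin.last n)
    have hpre : MeasurableSet ((fun z => (Fin.snoc x z : Fin (n+2) → ℝ)) ⁻¹' s) :=
      measurable_snoc_fixed x hs
    rw [Measure.map_apply (measurable_snoc_fixed x) hs]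
    unfold BGkernel
    rw [withDensity_apply _ hpre, ← lintegral_indicator hpre]
    unfold stepLaw
    have hind : Measurable (((fun z => (Fin.snoc x z : Fin (n+2) → ℝ)) ⁻¹' s).indicator
        (fun a => ENNReal.ofReal (v (a - b - c) / w (y - b - c)))) :=
      Measurable.indicator (by fun_prop) hpre
    rw [lintegral_map hind (show Measurable fun u : ℝ => y + u by fun_prop)]
    congr 1
  rw [heq]
  exact (hG.indicator hT).lintegral_prod_right'

end A

section B

lemma prod_snoc_ratio (v w : ℝ → ℝ) (b c : ℝ) {n : ℕ} (x : Fin (n+1) → ℝ) (z : ℝ) :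
    (∏ k : Fin (n+1), ENNReal.ofReal
        (v ((Fin.snoc x z : Fin (n+2) → ℝ) k.succ - b - c)
          / w ((Fin.snoc x z : Fin (n+2) → ℝ) k.castSucc - b - c)))
    = (∏ k : Fin n, ENNReal.ofReal (v (x k.succ - b - c) / w (x k.castSucc - b - c)))
      * ENNReal.ofReal (v (z - b - c) / w (x (Fin.last n) - b - c)) := by
  rw [Fin.prod_univ_castSucc]
  congr 1
  · refine Finset.prod_congr rfl fun k _ => ?_
    rw [Fin.succ_castSucc, Fin.snoc_castSucc, Fin.snoc_castSucc]
  · rw [Fin.succ_last, Fin.snoc_last, Fin.snoc_castSucc]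

lemma measurable_rho {v w : ℝ → ℝ} (hvm : Measurable v) (hwm : Measurable w) (b c : ℝ) (n : ℕ) :
    Measurable (fun p : Fin (n+1) → ℝ =>
      ∏ k : Fin n, ENNReal.ofReal (v (p k.succ - b - c) / w (p k.castSucc - b - c))) := by
  apply Finset.measurable_prod
  intro k _
  apply ENNReal.measurable_ofReal.comp
  exact ((hvm.comp (((measurable_pi_apply _).sub measurable_const).sub measurable_const)).div
    (hwm.comp (((measurable_pi_apply _).sub measurable_const).sub measurable_const)))

lemma finLaw_BG (μ : Measure ℝ) [SFinite μ] {v w : ℝ → ℝ}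
    (hvm : Measurable v) (hwm : Measurable w) (b c : ℝ) (n : ℕ) :
    finLaw (BGkernel μ v w b c) 0 n
      = (finLaw (stepLaw μ) 0 n).withDensity
          (fun p => ∏ k : Fin n, ENNReal.ofReal (v (p k.succ - b - c) / w (p k.castSucc - b - c))) := by
  induction n with
  | zero =>
      have h1 : (fun p : Fin 1 → ℝ =>
          ∏ k : Fin 0, ENNReal.ofReal (v (p k.succ - b - c) / w (p k.castSucc - b - c)))
          = (1 : (Fin 1 → ℝ) → ℝ≥0∞) := by
        funext p; simp
      rw [h1, withDensity_one]
      rfl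
  | succ n ih =>
      show (finLaw (BGkernel μ v w b c) 0 n).bind _
          = ((finLaw (stepLaw μ) 0 n).bind _).withDensity _
      rw [ih]
      ext s hs
      have hKQ := measurable_BGMap μ hvm hwm b c (n := n)
      have hKP := measurable_stepMap μ (n := n)
      have hrho := measurable_rho hvm hwm b c n
      have hrho1 := measurable_rho hvm hwm b c (n+1)
      rw [Measure.bind_apply hs hKQ.aemeasurable,
        lintegral_withDensity_eq_lintegral_mul _ hrho
          (show Measurable fun x : Fin (n+1) → ℝ =>
            (Measure.map (Fin.snoc x) (BGkernel μ v w b c (x (Fin.last n)))) s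
            from (Measure.measurable_coe hs).comp hKQ),
        withDensity_apply _ hs, ← lintegral_indicator hs,
        Measure.lintegral_bind hKP.aemeasurable (hrho1.indicator hs).aemeasurable]
      congr 1
      funext x
      set y := x (Fin.last n) with hy
      have hsnoc : Measurable (Fin.snoc (α := fun _ : Fin (n+2) => ℝ) x) :=
        measurable_snoc_fixed x
      have hpre : MeasurableSet ((Fin.snoc (α := fun _ : Fin (n+2) => ℝ) x) ⁻¹' s) := hsnoc hs
      rw [lintegral_map (hrho1.indicator hs) hsnoc]
      have hptwise : ∀ z : ℝ, s.indicator
            (fun p : Fin (n+2) → ℝ => ∏ k : Fin (n+1),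
              ENNReal.ofReal (v (p k.succ - b - c) / w (p k.castSucc - b - c)))
            (Fin.snoc x z)
          = (∏ k : Fin n, ENNReal.ofReal (v (x k.succ - b - c) / w (x k.castSucc - b - c)))
            * ((Fin.snoc (α := fun _ : Fin (n+2) => ℝ) x) ⁻¹' s).indicator
                (fun z => ENNReal.ofReal (v (z - b - c) / w (y - b - c))) z := by
        intro z
        by_cases hmem : (Fin.snoc x z : Fin (n+2) → ℝ) ∈ s
        · rw [Set.indicator_of_mem hmem, Set.indicator_of_mem (by exact hmem),
            prod_snoc_ratio, hy]
        · rw [Set.indicator_of_notMem hmem, Set.indicator_of_notMem (by exact hmem), mul_zero]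
      simp only [hptwise]
      rw [lintegral_const_mul _ (Measurable.indicator (by fun_prop) hpre)]
      simp only [Pi.mul_apply]
      congr 1
      rw [Measure.map_apply hsnoc hs]
      show (BGkernel μ v w b c y) _ = _
      unfold BGkernel
      rw [withDensity_apply _ hpre, ← lintegral_indicator hpre]

end B

section C

lemma real_prod_ge_one {v w : ℝ → ℝ} {b c : ℝ} (hvmono : Monotone v)
    (hwpos : ∀ t, 0 < w t)
    (hvw : ∀ t, t ≤ b → w (t - b - c) ≤ v (t - b - c))
    {n : ℕ} (p : Fin (n+1) → ℝ)
    (hlast : b < p (Fin.last n)) (hpre : ∀ k : Fin n, p k.castSucc ≤ b) :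
    1 ≤ ∏ k : Fin n, v (p k.succ - b - c) / w (p k.castSucc - b - c) := by
  rw [Finset.prod_div_distrib]
  rw [one_le_div (Finset.prod_pos fun k _ => hwpos _)]
  cases n with
  | zero => simp
  | succ m =>
      rw [Fin.prod_univ_succ (fun k : Fin (m+1) => w (p k.castSucc - b - c)),
        Fin.prod_univ_castSucc (fun k : Fin (m+1) => v (p k.succ - b - c))]
      have h1 : ∀ k : Fin m, v (p (k.castSucc).succ - b - c) = v (p (k.succ).castSucc - b - c) := by
        intro k; rw [Fin.succ_castSucc]
      rw [mul_comm (∏ k : Fin m, v (p (k.castSucc).succ - b - c))]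
      refine mul_le_mul ?_ ?_ ?_ ?_
      · calc w (p (0 : Fin (m+1)).castSucc - b - c) ≤ v (p (0 : Fin (m+1)).castSucc - b - c) :=
              hvw _ (hpre 0)
          _ ≤ v (p (Fin.last m).succ - b - c) := by
              apply hvmono
              have : p (0 : Fin (m+1)).castSucc ≤ p (Fin.last m).succ := by
                rw [Fin.succ_last]
                exact le_of_lt (lt_of_le_of_lt (hpre 0) hlast)
              linarith
      · calc (∏ k : Fin m, w (p (k.succ).castSucc - b - c))
            ≤ ∏ k : Fin m, v (p (k.succ).castSucc - b - c) :=
              Finset.prod_le_prod (fun k _ => le_of_lt (hwpos _))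
                (fun k _ => hvw _ (hpre k.succ))
          _ = ∏ k : Fin m, v (p (k.castSucc).succ - b - c) := by
              exact Finset.prod_congr rfl fun k _ => (h1 k).symm
      · exact Finset.prod_nonneg fun k _ => le_of_lt (hwpos _)
      · exact le_trans (le_of_lt (hwpos _)) (by
          calc w (p (0 : Fin (m+1)).castSucc - b - c) ≤ v (p (0 : Fin (m+1)).castSucc - b - c) :=
                hvw _ (hpre 0)
            _ ≤ v (p (Fin.last m).succ - b - c) := by
                apply hvmono
                have : p (0 : Fin (m+1)).castSucc ≤ p (Fin.last m).succ := by
                  rw [Fin.succ_last]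
                  exact le_of_lt (lt_of_le_of_lt (hpre 0) hlast)
                linarith)

lemma ennreal_prod_ge_one {v w : ℝ → ℝ} {b c : ℝ} (hvmono : Monotone v)
    (hvnn : ∀ t, 0 ≤ v t) (hwpos : ∀ t, 0 < w t)
    (hvw : ∀ t, t ≤ b → w (t - b - c) ≤ v (t - b - c))
    {n : ℕ} (p : Fin (n+1) → ℝ)
    (hlast : b < p (Fin.last n)) (hpre : ∀ k : Fin n, p k.castSucc ≤ b) :
    1 ≤ ∏ k : Fin n, ENNReal.ofReal (v (p k.succ - b - c) / w (p k.castSucc - b - c)) := by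
  rw [← ENNReal.ofReal_prod_of_nonneg (fun k _ => div_nonneg (hvnn _) (le_of_lt (hwpos _)))]
  exact ENNReal.one_le_ofReal.mpr (real_prod_ge_one hvmono hwpos hvw p hlast hpre)

end C

section D

lemma measurable_proj (n : ℕ) : Measurable (fun (s : ℕ → ℝ) (i : Fin (n+1)) => s i.val) :=
  measurable_pi_lambda _ fun i => measurable_pi_apply _

lemma main_le (μ : Measure ℝ) [SFinite μ] {v w : ℝ → ℝ}
    (hvm : Measurable v) (hwm : Measurable w) (hvmono : Monotone v) (hvnn : ∀ t, 0 ≤ v t)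
    (hwpos : ∀ t, 0 < w t) {b c : ℝ}
    (hvw : ∀ t, t ≤ b → w (t - b - c) ≤ v (t - b - c))
    {Pp Qp : Measure (ℕ → ℝ)}
    (hP : IsMarkovLaw (stepLaw μ) 0 Pp) (hQ : IsMarkovLaw (BGkernel μ v w b c) 0 Qp)
    (B : Set (ℕ → ℝ)) (hB : StoppedMeasurable b B) (hsub : B ⊆ crossEvent b) :
    Pp B ≤ Qp B := by
  classical
  -- the "stopped at n" cylinder set in finite dimensions
  set C : (n : ℕ) → Set (Fin (n+1) → ℝ) := fun n =>
    {p | b < p (Fin.last n)} ∩ ⋂ k : Fin n, {p | p k.castSucc ≤ b} with hC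
  have hCmeas : ∀ n, MeasurableSet (C n) := fun n =>
    ((measurableSet_lt measurable_const (measurable_pi_apply _)).inter
      (MeasurableSet.iInter fun k => measurableSet_le (measurable_pi_apply _) measurable_const))
  have hpreC : ∀ n, (fun (s : ℕ → ℝ) (i : Fin (n+1)) => s i.val) ⁻¹' (C n)
      = {s : ℕ → ℝ | s n > b ∧ ∀ k < n, s k ≤ b} := by
    intro n
    ext s
    simp only [hC, Set.mem_preimage, Set.mem_inter_iff, Set.mem_iInter, Set.mem_setOf_eq]
    constructor
    · rintro ⟨h1, h2⟩
      exact ⟨h1, fun k hk => h2 ⟨k, hk⟩⟩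
    · rintro ⟨h1, h2⟩
      exact ⟨h1, fun k => h2 k.val k.isLt⟩
  -- choose finite-dimensional representatives
  have hAn : ∀ n : ℕ, ∃ A : Set (Fin (n+1) → ℝ), MeasurableSet A ∧ A ⊆ C n ∧
      (fun (s : ℕ → ℝ) (i : Fin (n+1)) => s i.val) ⁻¹' A
        = B ∩ {s : ℕ → ℝ | s n > b ∧ ∀ k < n, s k ≤ b} := by
    intro n
    obtain ⟨A, hA, hAeq⟩ := MeasurableSpace.measurableSet_comap.mp (hB n)
    refine ⟨A ∩ C n, hA.inter (hCmeas n), Set.inter_subset_right, ?_⟩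
    rw [Set.preimage_inter, hAeq, hpreC n]
    ext s
    simp only [Set.mem_inter_iff, Set.mem_setOf_eq]
    tauto
  choose A hAmeas hAsub hApre using hAn
  set D : ℕ → Set (ℕ → ℝ) := fun n => B ∩ {s : ℕ → ℝ | s n > b ∧ ∀ k < n, s k ≤ b} with hD
  have hDmeas : ∀ n, MeasurableSet (D n) := by
    intro n
    show MeasurableSet (B ∩ {s : ℕ → ℝ | s n > b ∧ ∀ k < n, s k ≤ b})
    rw [← hApre n]
    exact measurable_proj n (hAmeas n)
  have hDdisj : Pairwise (Function.onFun Disjoint D) := by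
    intro i j hij
    rw [Function.onFun]
    rw [Set.disjoint_left]
    intro s hsi hsj
    rcases lt_or_gt_of_ne hij with h | h
    · exact absurd hsi.2.1 (not_lt.mpr (hsj.2.2 i h))
    · exact absurd hsj.2.1 (not_lt.mpr (hsi.2.2 j h))
  have hBunion : B = ⋃ n, D n := by
    apply Set.Subset.antisymm
    · intro s hs
      have hex : ∃ n, s n > b := hsub hs
      refine Set.mem_iUnion.mpr ⟨Nat.find hex, hs, Nat.find_spec hex, ?_⟩
      intro k hk
      exact not_lt.mp (Nat.find_min hex hk)
    · exact Set.iUnion_subset fun n => Set.inter_subset_left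
  have hPsum : Pp B = ∑' n, Pp (D n) := by
    rw [hBunion]; exact measure_iUnion hDdisj hDmeas
  have hQsum : Qp B = ∑' n, Qp (D n) := by
    rw [hBunion]; exact measure_iUnion hDdisj hDmeas
  rw [hPsum, hQsum]
  apply ENNReal.tsum_le_tsum
  intro n
  have hPD : Pp (D n) = finLaw (stepLaw μ) 0 n (A n) := by
    show Pp (B ∩ {s : ℕ → ℝ | s n > b ∧ ∀ k < n, s k ≤ b}) = _
    rw [← hApre n, ← Measure.map_apply (measurable_proj n) (hAmeas n), hP.2 n]
  have hQD : Qp (D n) = finLaw (BGkernel μ v w b c) 0 n (A n) := by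
    show Qp (B ∩ {s : ℕ → ℝ | s n > b ∧ ∀ k < n, s k ≤ b}) = _
    rw [← hApre n, ← Measure.map_apply (measurable_proj n) (hAmeas n), hQ.2 n]
  rw [hPD, hQD, finLaw_BG μ hvm hwm b c n, withDensity_apply _ (hAmeas n)]
  calc finLaw (stepLaw μ) 0 n (A n)
      = ∫⁻ _ in A n, 1 ∂(finLaw (stepLaw μ) 0 n) := (setLIntegral_one _).symm
    _ ≤ ∫⁻ p in A n, ∏ k : Fin n,
          ENNReal.ofReal (v (p k.succ - b - c) / w (p k.castSucc - b - c))
          ∂(finLaw (stepLaw μ) 0 n) := by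
        refine setLIntegral_mono' (hAmeas n) fun p hp => ?_
        have hpC := hAsub n hp
        rw [hC] at hpC
        obtain ⟨h1, h2⟩ := hpC
        exact ennreal_prod_ge_one hvmono hvnn hwpos hvw p h1
          (fun k => by simpa using Set.mem_iInter.mp h2 k)

end D

section E

lemma finLaw_one (κ : ℝ → Measure ℝ)
    (hκ : Measurable fun x : Fin 1 → ℝ =>
      ((κ (x (Fin.last 0))).map (Fin.snoc (α := fun _ : Fin 2 => ℝ) x) : Measure (Fin 2 → ℝ))) :
    finLaw κ 0 1 = (κ 0).map (Fin.snoc (α := fun _ : Fin 2 => ℝ) (fun _ => (0:ℝ))) := by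
  show (Measure.dirac fun _ => (0:ℝ)).bind _ = _
  rw [Measure.dirac_bind hκ]

lemma snoc_zero_apply0 (z : ℝ) : (Fin.snoc (α := fun _ : Fin 2 => ℝ) (fun _ => (0:ℝ)) z) 0 = 0 := by
  have h : (0 : Fin 2) = Fin.castSucc (0 : Fin 1) := rfl
  rw [h, Fin.snoc_castSucc]

lemma snoc_zero_apply1 (z : ℝ) : (Fin.snoc (α := fun _ : Fin 2 => ℝ) (fun _ => (0:ℝ)) z) 1 = z := by
  have h : (1 : Fin 2) = Fin.last 1 := rfl
  rw [h, Fin.snoc_last]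

lemma strict_part (μ : Measure ℝ) [IsProbabilityMeasure μ] {v w : ℝ → ℝ}
    (hvm : Measurable v) (hwm : Measurable w) (hvmono : Monotone v)
    {b c m : ℝ} (hb : 0 ≤ b) (hc : 0 ≤ c) (hm : 0 ≤ m)
    (hw0 : 0 < w (0 - b - c)) (hlt : w (0 - b - c) < v m)
    (hμpos : 0 < μ (Set.Ioi (b + c + m)))
    {Pp Qp : Measure (ℕ → ℝ)}
    (hP : IsMarkovLaw (stepLaw μ) 0 Pp) (hQ : IsMarkovLaw (BGkernel μ v w b c) 0 Qp) :
    ∃ B : Set (ℕ → ℝ), StoppedMeasurable b B ∧ B ⊆ crossEvent b ∧ Pp B < Qp B := by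
  set b₁ : ℝ := b + c + m with hb₁
  have hbb₁ : b ≤ b₁ := by linarith
  set A : Set (Fin 2 → ℝ) := {p | p 0 ≤ b ∧ b₁ < p 1} with hA
  have hAmeas : MeasurableSet A :=
    (measurableSet_le (measurable_pi_apply _) measurable_const).inter
      (measurableSet_lt measurable_const (measurable_pi_apply _))
  set B : Set (ℕ → ℝ) := {s | s 0 ≤ b ∧ b₁ < s 1} with hB
  have hpreA : (fun (s : ℕ → ℝ) (i : Fin 2) => s i.val) ⁻¹' A = B := rfl
  have hstop : StoppedMeasurable b B := by
    intro n
    match n with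
    | 0 =>
        refine MeasurableSpace.measurableSet_comap.mpr ⟨∅, MeasurableSet.empty, ?_⟩
        rw [Set.preimage_empty]
        ext s
        simp only [Set.mem_empty_iff_false, Set.mem_inter_iff, hB, Set.mem_setOf_eq, false_iff]
        rintro ⟨⟨h1, _⟩, h3, _⟩
        exact absurd h3 (not_lt.mpr h1)
    | 1 =>
        refine MeasurableSpace.measurableSet_comap.mpr
          ⟨A ∩ {p : Fin 2 → ℝ | b < p 1 ∧ p 0 ≤ b},
            hAmeas.inter ((measurableSet_lt measurable_const (measurable_pi_apply _)).inter
              (measurableSet_le (measurable_pi_apply _) measurable_const)), ?_⟩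
        ext s
        simp only [Set.mem_preimage, hA, hB, Set.mem_inter_iff, Set.mem_setOf_eq]
        constructor
        · rintro ⟨⟨h1, h2⟩, h3, h4⟩
          exact ⟨⟨h1, h2⟩, h3, fun k hk => by interval_cases k; exact h4⟩
        · rintro ⟨⟨h1, h2⟩, h3, h4⟩
          exact ⟨⟨h1, h2⟩, h3, h4 0 one_pos⟩
    | (n+2) =>
        refine MeasurableSpace.measurableSet_comap.mpr ⟨∅, MeasurableSet.empty, ?_⟩
        rw [Set.preimage_empty]
        ext s
        simp only [Set.mem_empty_iff_false, Set.mem_inter_iff, hB, Set.mem_setOf_eq, false_iff]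
        rintro ⟨⟨_, h2⟩, _, h4⟩
        have hs1 : s 1 ≤ b := h4 1 (by omega)
        linarith
  have hcross : B ⊆ crossEvent b := fun s hs => ⟨1, lt_of_le_of_lt hbb₁ hs.2⟩
  -- compute the preimage under snoc
  have hsnocpre : (Fin.snoc (α := fun _ : Fin 2 => ℝ) (fun _ => (0:ℝ))) ⁻¹' A = Set.Ioi b₁ := by
    ext z
    simp only [Set.mem_preimage, hA, Set.mem_setOf_eq, snoc_zero_apply0, snoc_zero_apply1,
      Set.mem_Ioi]
    exact ⟨fun h => h.2, fun h => ⟨hb, h⟩⟩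
  have hstep0 : stepLaw μ 0 = μ := by
    unfold stepLaw
    have : (fun x : ℝ => 0 + x) = id := by funext x; simp
    rw [this, Measure.map_id]
  have hsnocmeas : Measurable (Fin.snoc (α := fun _ : Fin 2 => ℝ) (fun _ => (0:ℝ))) :=
    measurable_snoc_fixed _
  -- value under Pp
  have hPB : Pp B = μ (Set.Ioi b₁) := by
    rw [← hpreA, ← Measure.map_apply (measurable_proj 1) hAmeas, hP.2 1,
      finLaw_one _ (measurable_stepMap μ 0),
      Measure.map_apply hsnocmeas hAmeas, hsnocpre, hstep0]
  -- value under Qp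
  have hQB : Qp B = ∫⁻ z in Set.Ioi b₁,
      ENNReal.ofReal (v (z - b - c) / w (0 - b - c)) ∂μ := by
    rw [← hpreA, ← Measure.map_apply (measurable_proj 1) hAmeas, hQ.2 1,
      finLaw_one _ (measurable_BGMap μ hvm hwm b c (n := 0)),
      Measure.map_apply hsnocmeas hAmeas, hsnocpre]
    show (BGkernel μ v w b c 0) _ = _
    unfold BGkernel
    rw [withDensity_apply _ measurableSet_Ioi, hstep0]
  refine ⟨B, hstop, hcross, ?_⟩
  rw [hPB, hQB]
  have hkey : ENNReal.ofReal (v m / w (0 - b - c)) * μ (Set.Ioi b₁)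
      ≤ ∫⁻ z in Set.Ioi b₁, ENNReal.ofReal (v (z - b - c) / w (0 - b - c)) ∂μ := by
    rw [← setLIntegral_const]
    refine setLIntegral_mono' measurableSet_Ioi fun z hz => ?_
    apply ENNReal.ofReal_le_ofReal
    refine (div_le_div_iff_of_pos_right hw0).mpr (hvmono ?_)
    have : b₁ < z := hz
    linarith [hb₁]
  refine lt_of_lt_of_le ?_ hkey
  have h1lt : (1 : ℝ≥0∞) < ENNReal.ofReal (v m / w (0 - b - c)) := by
    rw [← ENNReal.ofReal_one]
    exact (ENNReal.ofReal_lt_ofReal_iff (lt_trans zero_lt_one ((one_lt_div hw0).mpr hlt))).mpr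
      ((one_lt_div hw0).mpr hlt)
  calc μ (Set.Ioi b₁) = 1 * μ (Set.Ioi b₁) := (one_mul _).symm
    _ < ENNReal.ofReal (v m / w (0 - b - c)) * μ (Set.Ioi b₁) :=
        ENNReal.mul_lt_mul_left (ne_of_gt hμpos) (measure_ne_top μ _) h1lt

end E


/-- Proposition 3.2(i) of the paper. If `P(X+Z>t) ≤ P(Z>t)` for
all sufficiently large `t`, then there is a (sufficiently large) `c ∈ ℝ` such that
for every `b ≥ 0` the Blanchet–Glynn path measure `ℚ^{b,c}` is a direct proposal for
exact conditional sampling from `ℙ(· | τ_b < ∞)`. -/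
theorem stmt12
    {Ω : Type*} [MeasurableSpace Ω] (P : Measure Ω) [IsProbabilityMeasure P]
    (X Z : Ω → ℝ) (hXm : Measurable X) (hZm : Measurable Z)
    (hXint : Integrable X P) (hXmean : ∫ ω, X ω ∂P < 0)
    (hXsupp : ∀ t : ℝ, 0 < P {ω | X ω > t})
    (Fbar : ℝ → ℝ) (hFbar : ∀ t, Fbar t = (P {ω | X ω > t}).toReal)
    (hindep : IndepFun X Z P)
    (hZlaw : ∀ t : ℝ, (P {ω | Z ω > t}).toReal
        = min 1 ((1 / |∫ ω, X ω ∂P|) * ∫ s in Set.Ioi t, Fbar s))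
    (v w : ℝ → ℝ)
    (hv : ∀ x, v x = (P {ω | Z ω > -x}).toReal)
    (hw : ∀ x, w x = (P {ω | X ω + Z ω > -x}).toReal)
    (Ppath : Measure (ℕ → ℝ))
    (hPpath : IsMarkovLaw (stepLaw (P.map X)) 0 Ppath)
    (hdom : ∃ T : ℝ, ∀ t ≥ T,
      (P {ω | X ω + Z ω > t}).toReal ≤ (P {ω | Z ω > t}).toReal) :
    ∃ c : ℝ, ∀ b : ℝ, 0 ≤ b → ∀ Qpath : Measure (ℕ → ℝ),
      IsMarkovLaw (BGkernel (P.map X) v w b c) 0 Qpath →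
      DirectProposal b Ppath Qpath := by
  obtain ⟨T, hT⟩ := hdom
  set μ : Measure ℝ := P.map X with hμ
  haveI : IsProbabilityMeasure μ := Measure.isProbabilityMeasure_map hXm.aemeasurable
  -- monotonicity and basic bounds for v and w
  have hvmono : Monotone v := by
    intro a a' h
    rw [hv, hv]
    exact ENNReal.toReal_mono (measure_ne_top P _)
      (measure_mono fun ω hω => lt_of_le_of_lt (neg_le_neg h) hω)
  have hwmono : Monotone w := by
    intro a a' h
    rw [hw, hw]
    exact ENNReal.toReal_mono (measure_ne_top P _)
      (measure_mono fun ω hω => lt_of_le_of_lt (neg_le_neg h) hω)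
  have hvm : Measurable v := hvmono.measurable
  have hwm : Measurable w := hwmono.measurable
  have hvnn : ∀ t, 0 ≤ v t := fun t => by rw [hv]; exact ENNReal.toReal_nonneg
  -- Z has unbounded support from above somewhere: ∃ s₀, 0 < P {Z > s₀}
  have hζ : ∃ s₀ : ℝ, 0 < P {ω | Z ω > s₀} := by
    by_contra h
    push_neg at h
    have hz : ∀ n : ℕ, P {ω | Z ω > -(n : ℝ)} = 0 :=
      fun n => le_antisymm (h _) zero_le
    have huniv : (⋃ n : ℕ, {ω | Z ω > -(n : ℝ)}) = Set.univ := by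
      ext ω
      simp only [Set.mem_iUnion, Set.mem_setOf_eq, Set.mem_univ, iff_true]
      obtain ⟨n, hn⟩ := exists_nat_gt (-Z ω)
      exact ⟨n, by linarith⟩
    have h0 := measure_iUnion_null hz
    rw [huniv, measure_univ] at h0
    exact one_ne_zero h0
  obtain ⟨s₀, hs₀⟩ := hζ
  -- w is everywhere positive
  have hwpos : ∀ x, 0 < w x := by
    intro x
    rw [hw]
    apply ENNReal.toReal_pos _ (measure_ne_top P _)
    have hsub : {ω | X ω > -x - s₀} ∩ {ω | Z ω > s₀} ⊆ {ω | X ω + Z ω > -x} := by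
      rintro ω ⟨h1, h2⟩
      simp only [Set.mem_setOf_eq] at *
      linarith
    have hprod : P (X ⁻¹' Set.Ioi (-x - s₀) ∩ Z ⁻¹' Set.Ioi s₀)
        = P (X ⁻¹' Set.Ioi (-x - s₀)) * P (Z ⁻¹' Set.Ioi s₀) :=
      hindep.measure_inter_preimage_eq_mul _ _ measurableSet_Ioi measurableSet_Ioi
    have hpos : 0 < P ({ω | X ω > -x - s₀} ∩ {ω | Z ω > s₀}) := by
      show 0 < P (X ⁻¹' Set.Ioi (-x - s₀) ∩ Z ⁻¹' Set.Ioi s₀)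
      rw [hprod]
      exact ENNReal.mul_pos (hXsupp (-x - s₀)).ne' hs₀.ne'
    exact (lt_of_lt_of_le hpos (measure_mono hsub)).ne'
  -- lower-bounded pieces for X and Z
  have ha₀ : ∃ a₀ : ℝ, 0 < P {ω | X ω ≤ a₀} := by
    by_contra h
    push_neg at h
    have hz : ∀ n : ℕ, P {ω | X ω ≤ (n : ℝ)} = 0 := fun n => le_antisymm (h _) zero_le
    have huniv : (⋃ n : ℕ, {ω | X ω ≤ (n : ℝ)}) = Set.univ := by
      ext ω
      simp only [Set.mem_iUnion, Set.mem_setOf_eq, Set.mem_univ, iff_true]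
      obtain ⟨n, hn⟩ := exists_nat_gt (X ω)
      exact ⟨n, le_of_lt hn⟩
    have h0 := measure_iUnion_null hz
    rw [huniv, measure_univ] at h0
    exact one_ne_zero h0
  obtain ⟨a₀, ha₀⟩ := ha₀
  have hd₀ : ∃ d₀ : ℝ, 0 < P {ω | Z ω ≤ d₀} := by
    by_contra h
    push_neg at h
    have hz : ∀ n : ℕ, P {ω | Z ω ≤ (n : ℝ)} = 0 := fun n => le_antisymm (h _) zero_le
    have huniv : (⋃ n : ℕ, {ω | Z ω ≤ (n : ℝ)}) = Set.univ := by
      ext ω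
      simp only [Set.mem_iUnion, Set.mem_setOf_eq, Set.mem_univ, iff_true]
      obtain ⟨n, hn⟩ := exists_nat_gt (Z ω)
      exact ⟨n, le_of_lt hn⟩
    have h0 := measure_iUnion_null hz
    rw [huniv, measure_univ] at h0
    exact one_ne_zero h0
  obtain ⟨d₀, hd₀⟩ := hd₀
  -- the choice of c
  refine ⟨max T 0 + max (a₀ + d₀) 0, ?_⟩
  set c : ℝ := max T 0 + max (a₀ + d₀) 0 with hc
  have hcT : T ≤ c := le_trans (le_max_left _ _) (le_add_of_nonneg_right (le_max_right _ _))
  have hc0 : 0 ≤ c := add_nonneg (le_max_right _ _) (le_max_right _ _)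
  have hcad : a₀ + d₀ ≤ c := le_trans (le_max_left _ _) (le_add_of_nonneg_left (le_max_right _ _))
  intro b hb Qpath hQpath
  -- domination of w by v in the relevant region
  have hvw : ∀ t, t ≤ b → w (t - b - c) ≤ v (t - b - c) := by
    intro t ht
    rw [hv, hw]
    have := hT (-(t - b - c)) (by linarith)
    exact this
  constructor
  · intro B hB hsub
    exact main_le μ hvm hwm hvmono hvnn hwpos hvw hPpath hQpath B hB hsub
  · -- strict inequality witness
    have hw0 : 0 < w (0 - b - c) := hwpos _
    -- P(X + Z > b + c) < 1
    have hWset : {ω | X ω + Z ω > -(0 - b - c)} = {ω | X ω + Z ω > b + c} := by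
      ext ω
      simp only [Set.mem_setOf_eq]
      constructor <;> intro h <;> linarith
    have hWlt : P {ω | X ω + Z ω > b + c} < 1 := by
      have hsub2 : {ω | X ω + Z ω > b + c} ⊆ ({ω | X ω ≤ a₀} ∩ {ω | Z ω ≤ d₀})ᶜ := by
        intro ω hω
        simp only [Set.mem_compl_iff, Set.mem_inter_iff, Set.mem_setOf_eq, not_and_or, not_le]
        by_contra hcon
        push_neg at hcon
        simp only [Set.mem_setOf_eq] at hω
        obtain ⟨h1, h2⟩ := hcon
        linarith
      have hmeas : MeasurableSet ({ω | X ω ≤ a₀} ∩ {ω | Z ω ≤ d₀}) :=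
        (hXm measurableSet_Iic).inter (hZm measurableSet_Iic)
      have hpos2 : 0 < P ({ω | X ω ≤ a₀} ∩ {ω | Z ω ≤ d₀}) := by
        show 0 < P (X ⁻¹' Set.Iic a₀ ∩ Z ⁻¹' Set.Iic d₀)
        rw [hindep.measure_inter_preimage_eq_mul _ _ measurableSet_Iic measurableSet_Iic]
        exact ENNReal.mul_pos ha₀.ne' hd₀.ne'
      calc P {ω | X ω + Z ω > b + c} ≤ P (({ω | X ω ≤ a₀} ∩ {ω | Z ω ≤ d₀})ᶜ) :=
            measure_mono hsub2
        _ = 1 - P ({ω | X ω ≤ a₀} ∩ {ω | Z ω ≤ d₀}) := prob_compl_eq_one_sub hmeas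
        _ < 1 := ENNReal.sub_lt_self ENNReal.one_ne_top one_ne_zero hpos2.ne'
    -- find m with v m > w (0 - b - c)
    have hdir : Directed (· ⊆ ·) (fun n : ℕ => {ω | Z ω > -(n : ℝ)}) := by
      apply Monotone.directed_le
      intro i j hij ω hω
      simp only [Set.mem_setOf_eq] at *
      have : -(j : ℝ) ≤ -(i : ℝ) := by
        simp only [neg_le_neg_iff, Nat.cast_le]
        exact hij
      linarith
    have huniv2 : (⋃ n : ℕ, {ω | Z ω > -(n : ℝ)}) = Set.univ := by
      ext ω
      simp only [Set.mem_iUnion, Set.mem_setOf_eq, Set.mem_univ, iff_true]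
      obtain ⟨n, hn⟩ := exists_nat_gt (-Z ω)
      exact ⟨n, by linarith⟩
    have hsup : P {ω | X ω + Z ω > b + c} < ⨆ n : ℕ, P {ω | Z ω > -(n : ℝ)} := by
      rw [← Directed.measure_iUnion hdir, huniv2, measure_univ]
      exact hWlt
    obtain ⟨n, hn⟩ := lt_iSup_iff.mp hsup
    have hlt : w (0 - b - c) < v (n : ℝ) := by
      rw [hv, hw, hWset]
      exact (ENNReal.toReal_lt_toReal (measure_ne_top P _) (measure_ne_top P _)).mpr hn
    have hμpos : 0 < μ (Set.Ioi (b + c + (n : ℝ))) := by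
      rw [hμ, Measure.map_apply hXm measurableSet_Ioi]
      exact hXsupp _
    exact strict_part μ hvm hwm hvmono hb hc0 (Nat.cast_nonneg n) hw0 hlt hμpos hPpath hQpath
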